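/- Let T be an essentially small triangulated category in which every object is a finite direct sum of indecomposables, and suppose T is a block. Let M be indecomposable. Then the split t-structure (T^{≤0}_M, T^{≥0}_M) determined by M is bounded if and only if there is no path from M to M[-1]. -/

import Mathlib

/-!
STATEMENT 13: In the situation above, with `T` a block and `M` indecomposable, the split
t-structure `(T^{≤0}_M, T^{≥0}_M)` determined by `M` is bounded if and only if there is no
path from `M` to `M⟦-1⟧`.
-/
open CategoryTheory Category Limits Pretriangulated

section PathsAndBlocks

variable {C : Type*} [Category C] [Preadditive C] [HasZeroObject C] [HasShift C ℤ]
  [∀ n : ℤ, (shiftFunctor C n).Additive] [Pretriangulated C]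
  [HasBinaryBiproducts C] [HasFiniteBiproducts C]

/-- An object is indecomposable if it is non-zero and has no non-trivial
direct sum decomposition. -/
def IsIndec (X : C) : Prop :=
  ¬ IsZero X ∧ ∀ Y Z : C, (X ≅ Y ⊞ Z) → IsZero Y ∨ IsZero Z

/-- A single step of a path: both objects are indecomposable and either there is a
non-zero morphism `X ⟶ Y` or `Y = X⟦1⟧`. -/
def PathStep (X Y : C) : Prop :=
  IsIndec X ∧ IsIndec Y ∧ ((∃ f : X ⟶ Y, f ≠ 0) ∨ Nonempty (Y ≅ X⟦(1 : ℤ)⟧))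

/-- There is a path `X ⇝ Y`: a finite sequence of path steps. -/
def HasPath : C → C → Prop := Relation.ReflTransGen PathStep

/-- There is a walk from `X` to `Y`: a finite sequence of forward or backward path steps. -/
def HasWalk : C → C → Prop := Relation.ReflTransGen (fun X Y => PathStep X Y ∨ PathStep Y X)

/-- Every object is a finite direct sum of indecomposable objects. -/
def AllObjectsDecompose : Prop :=
  ∀ X : C, ∃ (n : ℕ) (G : Fin n → C), (∀ i, IsIndec (G i)) ∧ Nonempty (X ≅ ⨁ G)

variable (C) in
/-- A non-trivial decomposition of the triangulated category `C` into a product of two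
triangulated subcategories: two iso-closed, shift-closed classes of objects, each
containing a non-zero object, with no non-zero morphisms between them in either
direction, such that every object is a direct sum of an object of each. -/
def IsProductDecomp (P Q : C → Prop) : Prop :=
  (∀ {X Y : C}, (X ≅ Y) → P X → P Y) ∧ (∀ {X Y : C}, (X ≅ Y) → Q X → Q Y) ∧
  (∃ X, P X ∧ ¬ IsZero X) ∧ (∃ X, Q X ∧ ¬ IsZero X) ∧
  (∀ (X Y : C), P X → Q Y → ∀ f : X ⟶ Y, f = 0) ∧
  (∀ (X Y : C), Q X → P Y → ∀ f : X ⟶ Y, f = 0) ∧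
  (∀ (X : C) (n : ℤ), P X → P (X⟦n⟧)) ∧ (∀ (X : C) (n : ℤ), Q X → Q (X⟦n⟧)) ∧
  (∀ X : C, ∃ X' X'' : C, P X' ∧ Q X'' ∧ Nonempty (X ≅ X' ⊞ X''))

variable (C) in
/-- `C` is a block: it admits no non-trivial product decomposition. -/
def IsBlock : Prop := ¬ ∃ P Q : C → Prop, IsProductDecomp C P Q

end PathsAndBlocks

/-- `X` lies in the additive closure of the class `S` of objects. -/
def memAdd {C : Type*} [Category C] [Preadditive C] [HasBinaryBiproducts C]
    [HasFiniteBiproducts C] (S : C → Prop) (X : C) : Prop :=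
  ∃ (n : ℕ) (G : Fin n → C) (_ : ∀ i, S (G i)) (Z : C), Nonempty ((X ⊞ Z) ≅ ⨁ G)


set_option linter.unusedSectionVars false

section Aux

open Triangulated ZeroObject

set_option maxHeartbeats 1000000

variable {C : Type*} [Category C] [Preadditive C] [HasZeroObject C] [HasShift C ℤ]
  [∀ n : ℤ, (shiftFunctor C n).Additive] [Pretriangulated C]
  [HasBinaryBiproducts C] [HasFiniteBiproducts C]

lemma IsIndec.of_iso {X Y : C} (e : X ≅ Y) (hX : IsIndec X) : IsIndec Y :=
  ⟨fun h => hX.1 (h.of_iso e), fun Y' Z' i => hX.2 Y' Z' (e ≪≫ i)⟩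

lemma iso_hom_ne_zero {X Y : C} (e : X ≅ Y) (hX : ¬ IsZero X) : e.hom ≠ 0 := by
  intro h
  exact hX (by
    rw [IsZero.iff_id_eq_zero, ← e.hom_inv_id, h, zero_comp])

lemma shift_map_ne_zero {X Y : C} {f : X ⟶ Y} (hf : f ≠ 0) (k : ℤ) :
    (shiftFunctor C k).map f ≠ 0 := by
  rwa [Ne, Functor.map_eq_zero_iff]

lemma isZero_shift_iff (X : C) (k : ℤ) : IsZero (X⟦k⟧) ↔ IsZero X := by
  rw [IsZero.iff_id_eq_zero, IsZero.iff_id_eq_zero, ← CategoryTheory.Functor.map_id (shiftFunctor C k),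
    Functor.map_eq_zero_iff]

instance shiftPreservesBinaryBiproducts (k : ℤ) :
    PreservesBinaryBiproducts (shiftFunctor C k) :=
  preservesBinaryBiproducts_of_preservesBiproducts _

lemma IsIndec.shift {X : C} (hX : IsIndec X) (k : ℤ) : IsIndec (X⟦k⟧) := by
  constructor
  · rw [isZero_shift_iff]; exact hX.1
  · intro Y Z e
    have e' : X ≅ Y⟦(-k : ℤ)⟧ ⊞ Z⟦(-k : ℤ)⟧ :=
      ((shiftFunctorCompIsoId C k (-k) (by ring)).app X).symm ≪≫
        (shiftFunctor C (-k)).mapIso e ≪≫ (shiftFunctor C (-k)).mapBiprod Y Z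
    rcases hX.2 _ _ e' with h | h
    · exact Or.inl ((isZero_shift_iff Y (-k)).1 h)
    · exact Or.inr ((isZero_shift_iff Z (-k)).1 h)

lemma PathStep.shift {X Y : C} (h : PathStep X Y) (k : ℤ) : PathStep (X⟦k⟧) (Y⟦k⟧) := by
  obtain ⟨hX, hY, h | ⟨⟨e⟩⟩⟩ := h
  · obtain ⟨f, hf⟩ := h
    exact ⟨hX.shift k, hY.shift k, Or.inl ⟨f⟦k⟧', shift_map_ne_zero hf k⟩⟩
  · exact ⟨hX.shift k, hY.shift k, Or.inr ⟨(shiftFunctor C k).mapIso e ≪≫ shiftComm X 1 k⟩⟩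

lemma HasPath.shift {X Y : C} (h : HasPath X Y) (k : ℤ) : HasPath (X⟦k⟧) (Y⟦k⟧) :=
  Relation.ReflTransGen.lift (r := PathStep) (p := PathStep) (fun A => A⟦k⟧)
    (fun _ _ (hst : PathStep _ _) => hst.shift k) _ _ h

lemma HasPath.indec_right {X Y : C} (h : HasPath X Y) (hX : IsIndec X) : IsIndec Y := by
  induction h with
  | refl => exact hX
  | tail _ hstep _ => exact hstep.2.1

lemma pathStep_of_ne_zero {X Y : C} (hX : IsIndec X) (hY : IsIndec Y) (f : X ⟶ Y)
    (hf : f ≠ 0) : PathStep X Y := ⟨hX, hY, Or.inl ⟨f, hf⟩⟩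

lemma pathStep_of_iso {X Y : C} (hX : IsIndec X) (hY : IsIndec Y) (e : X ≅ Y) : PathStep X Y :=
  pathStep_of_ne_zero hX hY e.hom (iso_hom_ne_zero e hX.1)

/-- Transfer the target of a path along an isomorphism. -/
lemma HasPath.iso_right {M A B : C} (h : HasPath M A) (hM : IsIndec M) (e : A ≅ B)
    (hB : IsIndec B) : HasPath M B :=
  h.tail (pathStep_of_iso (h.indec_right hM) hB e)

lemma HasPath.step_up {M X : C} (h : HasPath M X) (hM : IsIndec M) : HasPath M (X⟦(1:ℤ)⟧) :=
  h.tail ⟨h.indec_right hM, (h.indec_right hM).shift 1, Or.inr ⟨Iso.refl _⟩⟩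


/-- `X⟦a⟧⟦b⟧ ≅ X⟦c⟧` when `a + b = c`. -/
def sAdd (X : C) (a b c : ℤ) (h : a + b = c) : X⟦a⟧⟦b⟧ ≅ X⟦c⟧ :=
  ((shiftFunctorAdd' C a b c h).app X).symm

/-- `X⟦a⟧⟦-a⟧ ≅ X`. -/
def sCancel (X : C) (a : ℤ) : X⟦a⟧⟦(-a : ℤ)⟧ ≅ X :=
  (shiftFunctorCompIsoId C a (-a) (by ring)).app X

/-- `X⟦-a⟧⟦a⟧ ≅ X`. -/
def sCancel' (X : C) (a : ℤ) : X⟦(-a : ℤ)⟧⟦a⟧ ≅ X :=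
  (shiftFunctorCompIsoId C (-a) a (by ring)).app X

/-- Paths can be raised in the shift at the target. -/
lemma HasPath.up {M X : C} (hM : IsIndec M) (hX : IsIndec X) {j j' : ℤ} (hle : j ≤ j')
    (h : HasPath M (X⟦j⟧)) : HasPath M (X⟦j'⟧) := by
  obtain ⟨m, rfl⟩ : ∃ m : ℕ, j' = j + m := ⟨(j'-j).toNat, by omega⟩
  clear hle
  induction m with
  | zero => simpa using h
  | succ m ih =>
      exact (ih.step_up hM).iso_right hM (sAdd X (j+m) 1 _ (by push_cast; ring)) (hX.shift _)

lemma hasPath_self_shift_zero {M : C} (hM : IsIndec M) : HasPath M (M⟦(0:ℤ)⟧) :=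
  Relation.ReflTransGen.single
    (pathStep_of_iso hM (hM.shift 0) ((shiftFunctorZero C ℤ).app M).symm)

/-- From a loop `M ⇝ M⟦-1⟧` we get paths to all negative shifts. -/
lemma loop_down {M : C} (hM : IsIndec M) (h : HasPath M (M⟦(-1:ℤ)⟧)) (k : ℤ) (hk : k ≤ -1) :
    HasPath M (M⟦k⟧) := by
  obtain ⟨m, rfl⟩ : ∃ m : ℕ, k = -1 - m := ⟨(-1-k).toNat, by omega⟩
  induction m with
  | zero => simpa using h
  | succ m ih =>
      have hm : (-1 - (m:ℤ)) + (-(1:ℤ)) = -1 - ((m+1 : ℕ) : ℤ) := by push_cast; ring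
      have h2 : HasPath (M⟦(-1 - (m:ℤ))⟧) (M⟦(-1:ℤ)⟧⟦(-1 - (m:ℤ))⟧) := h.shift _
      have h3 : HasPath M (M⟦(-1:ℤ)⟧⟦(-1 - (m:ℤ))⟧) := (ih (by omega)).trans h2
      exact h3.iso_right hM (sAdd M (-1) (-1 - (m:ℤ)) _ (by push_cast; ring))
        (hM.shift _)

section MemAdd

/-- `X ⊞ 0 ≅ X`. -/
noncomputable def biprodZeroIso (X : C) : X ⊞ (0 : C) ≅ X where
  hom := biprod.fst
  inv := biprod.lift (𝟙 X) 0
  hom_inv_id := by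
    apply biprod.hom_ext
    · simp
    · apply (isZero_zero C).eq_of_tgt
  inv_hom_id := by simp

/-- A single object of `S` lies in `memAdd S`. -/
lemma memAdd_single {S : C → Prop} {X : C} (hX : S X) : memAdd S X := by
  refine ⟨1, fun _ => X, fun _ => hX, 0, ⟨biprodZeroIso X ≪≫ ?_⟩⟩
  refine ⟨biproduct.lift fun _ => 𝟙 X, biproduct.desc fun _ => 𝟙 X, ?_, ?_⟩
  · simp [biproduct.lift_desc]
  · apply biproduct.hom_ext
    intro j
    apply biproduct.hom_ext'
    intro i
    have : i = j := Subsingleton.elim _ _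
    subst this
    simp

lemma memAdd_iso {S : C → Prop} {X Y : C} (e : X ≅ Y) (h : memAdd S X) : memAdd S Y := by
  obtain ⟨n, G, hG, Z, ⟨φ⟩⟩ := h
  exact ⟨n, G, hG, Z, ⟨(biprod.mapIso e.symm (Iso.refl Z)) ≪≫ φ⟩⟩

/-- Any finite biproduct of objects of `S` lies in `memAdd S`. -/
lemma memAdd_biproduct {S : C → Prop} {J : Type} [Fintype J] (G : J → C)
    (hG : ∀ j, S (G j)) : memAdd S (⨁ G) := by
  classical
  let e := (Fintype.equivFin J).symm
  have φ : (⨁ G) ≅ ⨁ (G ∘ e) :=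
    biproduct.whiskerEquiv e.symm (fun j => eqToIso (by simp))
  exact ⟨Fintype.card J, G ∘ e, fun i => hG _, 0, ⟨biprodZeroIso _ ≪≫ φ⟩⟩

/-- Key trace trick: an indecomposable object of `memAdd S` receives and emits a non-zero
morphism from/to one of the generators. -/
lemma memAdd_trace {S : C → Prop} {V : C} (hV : IsIndec V) (h : memAdd S V) :
    ∃ W, S W ∧ (∃ a : V ⟶ W, a ≠ 0) ∧ (∃ b : W ⟶ V, b ≠ 0) := by
  obtain ⟨n, G, hG, Z, ⟨φ⟩⟩ := h
  have hid : (𝟙 V : V ⟶ V) ≠ 0 := fun h0 => hV.1 ((IsZero.iff_id_eq_zero V).2 h0)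
  set ι : V ⟶ ⨁ G := biprod.inl ≫ φ.hom with hι
  set π : (⨁ G) ⟶ V := φ.inv ≫ biprod.fst with hπ
  have hiπ : ι ≫ π = 𝟙 V := by simp [hι, hπ]
  have htot0 : ι ≫ (∑ i : Fin n, biproduct.π G i ≫ biproduct.ι G i) ≫ π = 𝟙 V := by
    rw [biproduct.total]
    simpa using hiπ
  have htot : ∑ i : Fin n, (ι ≫ biproduct.π G i) ≫ (biproduct.ι G i ≫ π) = 𝟙 V := by
    have heq : ∑ i : Fin n, (ι ≫ biproduct.π G i) ≫ (biproduct.ι G i ≫ π)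
        = ι ≫ (∑ i : Fin n, biproduct.π G i ≫ biproduct.ι G i) ≫ π := by
      simp only [Preadditive.comp_sum, Preadditive.sum_comp, Category.assoc]
    rw [heq, biproduct.total]
    simpa using hiπ
  have : ∃ i : Fin n, (ι ≫ biproduct.π G i) ≫ (biproduct.ι G i ≫ π) ≠ 0 := by
    by_contra hno
    push_neg at hno
    apply hid
    rw [← htot]
    exact Finset.sum_eq_zero fun i _ => hno i
  obtain ⟨i, hi⟩ := this
  refine ⟨G i, hG i, ⟨ι ≫ biproduct.π G i, ?_⟩, ⟨biproduct.ι G i ≫ π, ?_⟩⟩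
  · intro h0; rw [h0, zero_comp] at hi; exact hi rfl
  · intro h0; rw [h0, comp_zero] at hi; exact hi rfl

end MemAdd


section Cone

/-- The key "cone" lemma: a non-zero morphism `Y ⟶ X` between indecomposables yields a
path `X ⇝ Y⟦1⟧`. -/
lemma cone_path (hdec : AllObjectsDecompose (C := C)) {X Y : C}
    (hX : IsIndec X) (hY : IsIndec Y) (f : Y ⟶ X) (hf : f ≠ 0) :
    HasPath X (Y⟦(1:ℤ)⟧) := by
  classical
  obtain ⟨Z, g, h, hT⟩ := Pretriangulated.distinguished_cocone_triangle f
  obtain ⟨n, G, hG, ⟨φ⟩⟩ := hdec Z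
  by_cases hcase : ∃ i, (g ≫ φ.hom ≫ biproduct.π G i ≠ 0) ∧ (biproduct.ι G i ≫ φ.inv ≫ h ≠ 0)
  · obtain ⟨i, h1, h2⟩ := hcase
    exact (Relation.ReflTransGen.single (pathStep_of_ne_zero hX (hG i) _ h1)).tail
      (pathStep_of_ne_zero (hG i) (hY.shift 1) _ h2)
  · push_neg at hcase
    set E : (⨁ G) ⟶ (⨁ G) :=
      biproduct.map (fun i => if g ≫ φ.hom ≫ biproduct.π G i = 0 then 𝟙 (G i) else 0) with hE
    have hgE : (g ≫ φ.hom) ≫ E = 0 := by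
      apply biproduct.hom_ext
      intro i
      rw [hE]
      simp only [Category.assoc, biproduct.map_π, zero_comp]
      by_cases h0 : g ≫ φ.hom ≫ biproduct.π G i = 0
      · rw [if_pos h0]
        simpa only [Category.comp_id] using h0
      · rw [if_neg h0]
        simp
    have hEh : E ≫ (φ.inv ≫ h) = φ.inv ≫ h := by
      apply biproduct.hom_ext'
      intro i
      rw [hE, biproduct.ι_map_assoc]
      by_cases h0 : g ≫ φ.hom ≫ biproduct.π G i = 0
      · rw [if_pos h0, Category.id_comp]
      · rw [if_neg h0, zero_comp]
        exact (hcase i h0).symm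
    set q : Z ⟶ Z := φ.hom ≫ E ≫ φ.inv with hq
    have hgq : g ≫ q = 0 := by
      have : g ≫ q = ((g ≫ φ.hom) ≫ E) ≫ φ.inv := by simp [hq]
      rw [this, hgE, zero_comp]
    have hqh : q ≫ h = h := by
      have : q ≫ h = φ.hom ≫ (E ≫ (φ.inv ≫ h)) := by simp [hq]
      rw [this, hEh, Iso.hom_inv_id_assoc]
    have h1 : (𝟙 Z - q) ≫ h = 0 := by
      rw [Preadditive.sub_comp, Category.id_comp, hqh, sub_self]
    obtain ⟨u, hu⟩ : ∃ u : Z ⟶ X, 𝟙 Z - q = u ≫ g := by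
      obtain ⟨u₀, hu₀⟩ := Pretriangulated.Triangle.coyoneda_exact₃ _ hT (𝟙 Z - q) h1
      exact ⟨u₀, hu₀⟩
    have hgug : g ≫ u ≫ g = g := by
      rw [← hu, Preadditive.comp_sub, Category.comp_id, hgq, sub_zero]
    have h2 : (𝟙 X - g ≫ u) ≫ g = 0 := by
      rw [Preadditive.sub_comp, Category.id_comp, Category.assoc, hgug, sub_self]
    obtain ⟨s, hs⟩ : ∃ s : X ⟶ Y, 𝟙 X - g ≫ u = s ≫ f := by
      obtain ⟨s₀, hs₀⟩ := Pretriangulated.Triangle.coyoneda_exact₂ _ hT (𝟙 X - g ≫ u) h2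
      exact ⟨s₀, hs₀⟩
    by_cases hs0 : s = 0
    · exfalso
      apply hf
      have hfg : f ≫ g = 0 := Pretriangulated.comp_distTriang_mor_zero₁₂ _ hT
      have hfid : f = f ≫ (𝟙 X - g ≫ u) := by
        rw [Preadditive.comp_sub, Category.comp_id, ← Category.assoc, hfg, zero_comp, sub_zero]
      rw [hfid, hs, hs0, zero_comp, comp_zero]
    · exact HasPath.step_up
        (Relation.ReflTransGen.single (pathStep_of_ne_zero hX hY s hs0)) hX

/-- Each path step can be reversed, up to shifting by `1`. -/
lemma PathStep.reverse (hdec : AllObjectsDecompose (C := C)) {U V : C} (h : PathStep U V) :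
    HasPath V (U⟦(1:ℤ)⟧) := by
  obtain ⟨hU, hV, hor | ⟨⟨e⟩⟩⟩ := h
  · obtain ⟨f, hf⟩ := hor
    exact cone_path hdec hV hU f hf
  · exact Relation.ReflTransGen.single (pathStep_of_iso hV (hU.shift 1) e)

end Cone

section Walks

lemma HasWalk.indec_right {M X : C} (h : HasWalk M X) (hM : IsIndec M) : IsIndec X := by
  induction h with
  | refl => exact hM
  | tail _ hstep ih => rcases hstep with h | h
                       exacts [h.2.1, h.1]

lemma hasWalk_shift_self {X : C} (hX : IsIndec X) (k : ℤ) : HasWalk X (X⟦k⟧) := by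
  induction k using Int.induction_on with
  | zero =>
      exact Relation.ReflTransGen.single
        (Or.inl (pathStep_of_iso hX (hX.shift 0) ((shiftFunctorZero C ℤ).app X).symm))
  | succ k ih =>
      exact ih.tail (Or.inl ⟨hX.shift _, hX.shift _, Or.inr ⟨(sAdd X k 1 _ rfl).symm⟩⟩)
  | pred k ih =>
      exact ih.tail (Or.inr ⟨hX.shift _, hX.shift _, Or.inr ⟨(sAdd X (-k-1) 1 _ (by ring)).symm⟩⟩)

lemma HasWalk.shift {M X : C} (h : HasWalk M X) (hM : IsIndec M) (k : ℤ) :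
    HasWalk M (X⟦k⟧) :=
  h.trans (hasWalk_shift_self (h.indec_right hM) k)

/-- From a walk `M ~ X` we obtain a path `M ⇝ X⟦k⟧` for some `k` and a
return path `X ⇝ M⟦r⟧` for some `r`. -/
lemma walk_bounds (hdec : AllObjectsDecompose (C := C)) {M X : C} (hM : IsIndec M)
    (h : HasWalk M X) : (∃ k : ℤ, HasPath M (X⟦k⟧)) ∧ (∃ r : ℤ, HasPath X (M⟦r⟧)) := by
  induction h with
  | refl => exact ⟨⟨0, hasPath_self_shift_zero hM⟩, ⟨0, hasPath_self_shift_zero hM⟩⟩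
  | @tail U V hw hstep ih =>
      obtain ⟨⟨k, hk⟩, ⟨r, hr⟩⟩ := ih
      have hU : IsIndec U := HasWalk.indec_right hw hM
      rcases hstep with hst | hst
      · refine ⟨⟨k, hk.tail (hst.shift k)⟩, ⟨r+1, ?_⟩⟩
        have h1 : HasPath V (U⟦(1:ℤ)⟧) := hst.reverse hdec
        have h2 : HasPath (U⟦(1:ℤ)⟧) ((M⟦r⟧)⟦(1:ℤ)⟧) := hr.shift 1
        exact HasPath.iso_right (Relation.ReflTransGen.trans h1 h2) hst.2.1 (sAdd M r 1 _ rfl) (hM.shift _)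
      · refine ⟨⟨k+1, ?_⟩, ⟨r, Relation.ReflTransGen.head hst hr⟩⟩
        have h1 : HasPath U (V⟦(1:ℤ)⟧) := hst.reverse hdec
        have h2 : HasPath (U⟦k⟧) ((V⟦(1:ℤ)⟧)⟦k⟧) := h1.shift k
        exact HasPath.iso_right (Relation.ReflTransGen.trans hk h2) hM (sAdd V 1 k _ (by ring)) (hst.1.shift _)

end Walks


section Block

lemma memAdd_hom_eq_zero {S S' : C → Prop}
    (hzero : ∀ (U V : C), S U → S' V → ∀ f : U ⟶ V, f = 0)
    {X Y : C} (hX : memAdd S X) (hY : memAdd S' Y) (f : X ⟶ Y) : f = 0 := by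
  obtain ⟨n, G, hG, Z, ⟨φ⟩⟩ := hX
  obtain ⟨m, H, hH, W, ⟨ψ⟩⟩ := hY
  have hF : φ.inv ≫ (biprod.fst ≫ f ≫ biprod.inl) ≫ ψ.hom = 0 := by
    apply biproduct.hom_ext
    intro j
    apply biproduct.hom_ext'
    intro i
    simp only [zero_comp, comp_zero, Category.assoc]
    exact hzero _ _ (hG i) (hH j) _
  have hm : (biprod.fst ≫ f ≫ biprod.inl : X ⊞ Z ⟶ Y ⊞ W) = 0 := by
    calc (biprod.fst ≫ f ≫ biprod.inl : X ⊞ Z ⟶ Y ⊞ W)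
        = φ.hom ≫ (φ.inv ≫ (biprod.fst ≫ f ≫ biprod.inl) ≫ ψ.hom) ≫ ψ.inv := by simp
      _ = 0 := by rw [hF]; simp
  calc f = biprod.inl ≫ (biprod.fst ≫ f ≫ biprod.inl : X ⊞ Z ⟶ Y ⊞ W) ≫ biprod.fst := by
          simp
    _ = 0 := by rw [hm]; simp

/-- Splitting a finite biproduct along a predicate on the index set. -/
noncomputable def biproductSubtypeIso {J : Type} [Fintype J] (f : J → C) (p : J → Prop)
    [DecidablePred p] :
    (⨁ f) ≅ (⨁ Subtype.restrict p f) ⊞ (⨁ Subtype.restrict (fun j => ¬ p j) f) where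
  hom := biprod.lift (biproduct.toSubtype f p) (biproduct.toSubtype f fun j => ¬ p j)
  inv := biprod.desc (biproduct.fromSubtype f p) (biproduct.fromSubtype f fun j => ¬ p j)
  hom_inv_id := by
    apply biproduct.hom_ext'
    intro i
    rw [Category.comp_id, biprod.lift_desc, Preadditive.comp_add]
    by_cases h0 : p i <;> simp [h0]
  inv_hom_id := by
    apply biprod.hom_ext'
    · apply biprod.hom_ext
      · rw [biprod.inl_desc_assoc, Category.assoc, biprod.lift_fst,
          biproduct.fromSubtype_toSubtype]
        simp
      · rw [biprod.inl_desc_assoc, Category.assoc, biprod.lift_snd]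
        apply biproduct.hom_ext'
        intro j
        simp only [← Category.assoc, biproduct.ι_fromSubtype, biproduct.ι_toSubtype,
          dif_neg (show ¬¬p j by simpa using j.2)]
        simp
        exact (biproduct.ι_toSubtype f (fun j => ¬p j) j.1).trans (dif_neg (show ¬¬p j.1 by simpa using j.2))
    · apply biprod.hom_ext
      · rw [biprod.inr_desc_assoc, Category.assoc, biprod.lift_fst]
        apply biproduct.hom_ext'
        intro j
        simp only [← Category.assoc, biproduct.ι_fromSubtype, biproduct.ι_toSubtype,
          dif_neg j.2]
        simp
        exact (biproduct.ι_toSubtype f p j.1).trans (dif_neg j.2)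
      · rw [biprod.inr_desc_assoc, Category.assoc, biprod.lift_snd,
          biproduct.fromSubtype_toSubtype]
        simp

lemma memAdd_shift {S : C → Prop} (hS : ∀ (W : C) (k : ℤ), S W → S (W⟦k⟧)) {X : C} (k : ℤ)
    (h : memAdd S X) : memAdd S (X⟦k⟧) := by
  obtain ⟨n, G, hG, Z, ⟨φ⟩⟩ := h
  refine ⟨n, fun i => (G i)⟦k⟧, fun i => hS _ _ (hG i), Z⟦k⟧, ⟨?_⟩⟩
  calc X⟦k⟧ ⊞ Z⟦k⟧ ≅ (X ⊞ Z)⟦k⟧ := ((shiftFunctor C k).mapBiprod X Z).symm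
    _ ≅ (⨁ G)⟦k⟧ := (shiftFunctor C k).mapIso φ
    _ ≅ ⨁ fun i => (G i)⟦k⟧ := (shiftFunctor C k).mapBiproduct G

lemma HasWalk.iso_right {M A B : C} (h : HasWalk M A) (hM : IsIndec M) (e : A ≅ B)
    (hB : IsIndec B) : HasWalk M B :=
  h.tail (Or.inl (pathStep_of_iso (HasWalk.indec_right h hM) hB e))

/-- In a block, every indecomposable is connected to `M` by a walk. -/
lemma walk_connected (hdec : AllObjectsDecompose (C := C)) (hblock : IsBlock C)
    {M : C} (hM : IsIndec M) (X : C) (hX : IsIndec X) : HasWalk M X := by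
  classical
  by_contra hX0
  apply hblock
  refine ⟨memAdd (fun W => IsIndec W ∧ HasWalk M W),
    memAdd (fun W => IsIndec W ∧ ¬ HasWalk M W), ?_, ?_, ?_, ?_, ?_, ?_, ?_, ?_, ?_⟩
  · intro A B e h; exact memAdd_iso e h
  · intro A B e h; exact memAdd_iso e h
  · exact ⟨M, memAdd_single ⟨hM, Relation.ReflTransGen.refl⟩, hM.1⟩
  · exact ⟨X, memAdd_single ⟨hX, hX0⟩, hX.1⟩
  · intro A B hA hB f
    refine memAdd_hom_eq_zero ?_ hA hB f
    intro U V hU hV g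
    by_contra hg
    exact hV.2 (hU.2.tail (Or.inl (pathStep_of_ne_zero hU.1 hV.1 g hg)))
  · intro A B hA hB f
    refine memAdd_hom_eq_zero ?_ hA hB f
    intro U V hU hV g
    by_contra hg
    exact hU.2 (hV.2.tail (Or.inr (pathStep_of_ne_zero hU.1 hV.1 g hg)))
  · intro A k hA
    refine memAdd_shift ?_ k hA
    intro W k' hW
    exact ⟨hW.1.shift k', HasWalk.shift hW.2 hM k'⟩
  · intro A k hA
    refine memAdd_shift ?_ k hA
    intro W k' hW
    refine ⟨hW.1.shift k', fun hwk => hW.2 ?_⟩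
    exact HasWalk.iso_right (HasWalk.shift hwk hM (-k')) hM (sCancel W k') hW.1
  · intro A
    obtain ⟨n, G, hG, ⟨φ⟩⟩ := hdec A
    exact ⟨⨁ Subtype.restrict (fun i => HasWalk M (G i)) G,
      ⨁ Subtype.restrict (fun i => ¬ HasWalk M (G i)) G,
      memAdd_biproduct _ (fun j => ⟨hG j.1, j.2⟩),
      memAdd_biproduct _ (fun j => ⟨hG j.1, j.2⟩),
      ⟨φ ≪≫ biproductSubtypeIso G _⟩⟩

end Block


section TStruct

variable (t : Triangulated.TStructure C) {M : C}

lemma LE_of_memAdd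
    (hLE : ∀ X : C, t.le 0 X ↔ memAdd (fun Y => IsIndec Y ∧ HasPath M Y) X)
    {X : C} (n : ℤ) (h : memAdd (fun Y => IsIndec Y ∧ HasPath M Y) (X⟦n⟧)) : t.le n X := by
  have h0 : t.le 0 (X⟦n⟧) := (hLE _).2 h
  have h1 : t.le n ((X⟦n⟧)⟦(-n : ℤ)⟧) := t.le_shift 0 (-n) n (by ring) _ h0
  exact (t.le n).prop_of_iso (sCancel X n) h1

lemma GE_of_memAdd
    (hGE : ∀ X : C, t.ge 0 X ↔ memAdd (fun Z => IsIndec Z ∧ ¬ HasPath M (Z⟦(-1 : ℤ)⟧)) X)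
    {X : C} (n : ℤ) (h : memAdd (fun Z => IsIndec Z ∧ ¬ HasPath M (Z⟦(-1 : ℤ)⟧)) (X⟦n⟧)) :
    t.ge n X := by
  have h0 : t.ge 0 (X⟦n⟧) := (hGE _).2 h
  have h1 : t.ge n ((X⟦n⟧)⟦(-n : ℤ)⟧) := t.ge_shift 0 (-n) n (by ring) _ h0
  exact (t.ge n).prop_of_iso (sCancel X n) h1

/-- Extraction: if an indecomposable `X` is in `GE n`, then there is no path
`M ⇝ X⟦n-1⟧`. -/
lemma no_path_of_GE (hM : IsIndec M)
    (hGE : ∀ X : C, t.ge 0 X ↔ memAdd (fun Z => IsIndec Z ∧ ¬ HasPath M (Z⟦(-1 : ℤ)⟧)) X)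
    {X : C} (hX : IsIndec X) (n : ℤ) (h : t.ge n X) : ¬ HasPath M (X⟦n - 1⟧) := by
  have h0 : t.ge 0 (X⟦n⟧) := t.ge_shift n n 0 (by ring) X h
  obtain ⟨W, ⟨hWind, hWnp⟩, ⟨a, ha⟩, -⟩ := memAdd_trace (hX.shift n) ((hGE _).1 h0)
  intro hp
  have hp' : HasPath M ((X⟦n⟧)⟦(-1 : ℤ)⟧) :=
    HasPath.iso_right hp hM (sAdd X n (-1) (n - 1) (by ring)).symm ((hX.shift n).shift (-1))
  exact hWnp (hp'.tail ((pathStep_of_ne_zero (hX.shift n) hWind a ha).shift (-1)))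

end TStruct

end Aux

open Triangulated in
theorem bounded_iff_no_path_to_negative_shift
    {C : Type*} [Category C] [Preadditive C] [HasZeroObject C] [HasShift C ℤ]
    [∀ n : ℤ, (shiftFunctor C n).Additive] [Pretriangulated C]
    [HasBinaryBiproducts C] [HasFiniteBiproducts C] [EssentiallySmall C]
    (hdec : AllObjectsDecompose (C := C)) (hblock : IsBlock C) (M : C) (hM : IsIndec M)
    (t : TStructure C)
    (hLE : ∀ X : C, t.le 0 X ↔ memAdd (fun Y => IsIndec Y ∧ HasPath M Y) X)
    (hGE : ∀ X : C, t.ge 0 X ↔ memAdd (fun Z => IsIndec Z ∧ ¬ HasPath M (Z⟦(-1 : ℤ)⟧)) X) :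
    (∀ X : C, ∃ n : ℕ, t.le n X ∧ t.ge (-(n : ℤ)) X) ↔ ¬ HasPath M (M⟦(-1 : ℤ)⟧) := by
  constructor
  · -- bounded implies no loop
    intro hb hp
    obtain ⟨n, -, hgeM⟩ := hb M
    exact no_path_of_GE t hM hGE hM (-(n : ℤ)) hgeM
      (loop_down hM hp (-(n : ℤ) - 1) (by omega))
  · -- no loop implies bounded
    intro hnl X
    obtain ⟨m, G, hG, ⟨φ⟩⟩ := hdec X
    have hbounds : ∀ i, ∃ N : ℕ, HasPath M ((G i)⟦(N : ℤ)⟧) ∧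
        (∀ j : ℤ, j ≤ -(N : ℤ) - 1 → ¬ HasPath M ((G i)⟦j⟧)) := by
      intro i
      obtain ⟨⟨k, hk⟩, ⟨r, hr⟩⟩ :=
        walk_bounds hdec hM (walk_connected hdec hblock hM (G i) (hG i))
      refine ⟨(max k r).toNat, HasPath.up hM (hG i) (by omega) hk, ?_⟩
      intro j hj hpj
      have hret : HasPath ((G i)⟦j⟧) ((M⟦r⟧)⟦j⟧) := hr.shift j
      have hMrj : HasPath M (M⟦r + j⟧) :=
        HasPath.iso_right (Relation.ReflTransGen.trans hpj hret) hM
          (sAdd M r j (r + j) rfl) (hM.shift _)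
      exact hnl (HasPath.up hM hM (by omega) hMrj)
    choose N h1 h2 using hbounds
    classical
    set n : ℕ := Finset.univ.sup N with hn
    have hNn : ∀ i, N i ≤ n := fun i => Finset.le_sup (Finset.mem_univ i)
    refine ⟨n, ?_, ?_⟩
    · refine LE_of_memAdd t hLE (n : ℤ) ?_
      have hmem : memAdd (fun Y => IsIndec Y ∧ HasPath M Y) (⨁ fun i => (G i)⟦(n : ℤ)⟧) :=
        memAdd_biproduct _ (fun i =>
          ⟨(hG i).shift _, HasPath.up hM (hG i) (by have := hNn i; omega) (h1 i)⟩)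
      refine memAdd_iso ?_ hmem
      exact ((shiftFunctor C (n : ℤ)).mapBiproduct G).symm ≪≫
        (shiftFunctor C (n : ℤ)).mapIso φ.symm
    · refine GE_of_memAdd t hGE (-(n : ℤ)) ?_
      have hmem : memAdd (fun Z => IsIndec Z ∧ ¬ HasPath M (Z⟦(-1 : ℤ)⟧))
          (⨁ fun i => (G i)⟦(-(n : ℤ))⟧) := by
        refine memAdd_biproduct _ (fun i => ⟨(hG i).shift _, fun hp => ?_⟩)
        have hp' : HasPath M ((G i)⟦-(n : ℤ) - 1⟧) :=
          HasPath.iso_right hp hM (sAdd (G i) (-(n : ℤ)) (-1) (-(n : ℤ) - 1) (by ring))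
            ((hG i).shift _)
        exact h2 i (-(n : ℤ) - 1) (by have := hNn i; omega) hp'
      refine memAdd_iso ?_ hmem
      exact ((shiftFunctor C (-(n : ℤ))).mapBiproduct G).symm ≪≫
        (shiftFunctor C (-(n : ℤ))).mapIso φ.symm
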